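/- If γ₁ is rank-1 homotopic to γ₁', γ₂ is rank-1 homotopic to γ₂', and γ₁(1) = γ₂(0) (so that also γ₁'(1) = γ₂'(0), since rank-1 homotopies are 2-paths and hence fix endpoints), then the composition γ₁∘γ₂ is rank-1 homotopic to γ₁'∘γ₂'. In particular, composition of 1-tracks (rank-1 homotopy classes of 1-paths) is well defined. -/

import Mathlib

open scoped Manifold

variable (E : Type*) [NormedAddCommGroup E] [NormedSpace ℝ E] [FiniteDimensional ℝ E]
variable {M : Type*} [TopologicalSpace M] [ChartedSpace E M]
  [IsManifold 𝓘(ℝ, E) (⊤ : ℕ∞) M]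

/-- A 1-path in `M`: a smooth map `ℝ → M` that is constant near `(-∞, 0]` and near
`[1, ∞)` (in the sense of the `ε`-conditions). -/
def IsOnePath (γ : ℝ → M) : Prop :=
  ContMDiff 𝓘(ℝ, ℝ) 𝓘(ℝ, E) (⊤ : ℕ∞) γ ∧
    ∃ ε > (0 : ℝ), (∀ t ≤ ε, γ t = γ 0) ∧ (∀ t, 1 - ε ≤ t → γ t = γ 1)

/-- A 2-path in `M`, as a smooth map `ℝ × ℝ → M` with coordinates `(s, t)`,
constant near the boundary in each variable, whose images at `t = 0` and `t = 1`
are single points. -/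
def IsTwoPath (g : ℝ × ℝ → M) : Prop :=
  ContMDiff 𝓘(ℝ, ℝ × ℝ) 𝓘(ℝ, E) (⊤ : ℕ∞) g ∧
    (∃ ε > (0 : ℝ),
      (∀ s t, s ≤ ε → g (s, t) = g (0, t)) ∧
      (∀ s t, 1 - ε ≤ s → g (s, t) = g (1, t)) ∧
      (∀ s t, t ≤ ε → g (s, t) = g (s, 0)) ∧
      (∀ s t, 1 - ε ≤ t → g (s, t) = g (s, 1))) ∧
    (∀ s s', g (s, 0) = g (s', 0)) ∧ (∀ s s', g (s, 1) = g (s', 1))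

/-- A rank-1 homotopy: a 2-path whose differential has rank at most 1 at every point. -/
def IsRank1Homotopy (h : ℝ × ℝ → M) : Prop :=
  IsTwoPath E h ∧
    ∀ p : ℝ × ℝ,
      Module.finrank ℝ
        (LinearMap.range (mfderiv 𝓘(ℝ, ℝ × ℝ) 𝓘(ℝ, E) h p).toLinearMap) ≤ 1

/-- Two 1-paths are rank-1 homotopic if they are joined by a rank-1 homotopy. -/
def Rank1Homotopic (γ γ' : ℝ → M) : Prop :=
  ∃ h : ℝ × ℝ → M, IsRank1Homotopy E h ∧ (∀ t, h (0, t) = γ t) ∧ (∀ t, h (1, t) = γ' t)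

/-- Composition of 1-paths. -/
noncomputable def compPath (γ₁ γ₂ : ℝ → M) : ℝ → M := fun t =>
  if t ≤ 1 / 2 then γ₁ (2 * t) else γ₂ (2 * t - 1)

lemma auxA_contMDiff (a b : ℝ) :
    ContMDiff 𝓘(ℝ, ℝ × ℝ) 𝓘(ℝ, ℝ × ℝ) (⊤ : ℕ∞) (fun q : ℝ × ℝ => ((q.1, a * q.2 + b) : ℝ × ℝ)) := by
  rw [contMDiff_iff_contDiff]
  fun_prop

lemma auxA_mfderiv (a b : ℝ) (p : ℝ × ℝ) :
    mfderiv 𝓘(ℝ, ℝ × ℝ) 𝓘(ℝ, ℝ × ℝ) (fun q : ℝ × ℝ => ((q.1, a * q.2 + b) : ℝ × ℝ)) p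
      = ((ContinuousLinearMap.fst ℝ ℝ ℝ).prod (a • ContinuousLinearMap.snd ℝ ℝ ℝ)) := by
  rw [mfderiv_eq_fderiv]
  have h : (fun q : ℝ × ℝ => ((q.1, a * q.2 + b) : ℝ × ℝ))
      = fun q : ℝ × ℝ =>
        ((ContinuousLinearMap.fst ℝ ℝ ℝ).prod (a • ContinuousLinearMap.snd ℝ ℝ ℝ)) q
          + ((0 : ℝ), b) := by
    funext q
    simp [ContinuousLinearMap.prod_apply, Prod.ext_iff]
  rw [h, fderiv_add_const, ContinuousLinearMap.fderiv]

lemma aux_rank {g : ℝ × ℝ → M} (hg : ContMDiff 𝓘(ℝ, ℝ × ℝ) 𝓘(ℝ, E) (⊤ : ℕ∞) g)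
    (hr : ∀ p, Module.finrank ℝ
      (LinearMap.range (mfderiv 𝓘(ℝ, ℝ × ℝ) 𝓘(ℝ, E) g p).toLinearMap) ≤ 1)
    (a b : ℝ) (ha : a ≠ 0) (p : ℝ × ℝ) :
    Module.finrank ℝ (LinearMap.range (mfderiv 𝓘(ℝ, ℝ × ℝ) 𝓘(ℝ, E)
      (fun q : ℝ × ℝ => g (q.1, a * q.2 + b)) p).toLinearMap) ≤ 1 := by
  have hA := auxA_contMDiff a b
  have hcomp : mfderiv 𝓘(ℝ, ℝ × ℝ) 𝓘(ℝ, E) (fun q : ℝ × ℝ => g (q.1, a * q.2 + b)) p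
      = (mfderiv 𝓘(ℝ, ℝ × ℝ) 𝓘(ℝ, E) g (p.1, a * p.2 + b)).comp
        (mfderiv 𝓘(ℝ, ℝ × ℝ) 𝓘(ℝ, ℝ × ℝ)
          (fun q : ℝ × ℝ => ((q.1, a * q.2 + b) : ℝ × ℝ)) p) :=
    mfderiv_comp p ((hg _).mdifferentiableAt (by simp)) ((hA p).mdifferentiableAt (by simp))
  rw [hcomp, auxA_mfderiv]
  have hsurj : Function.Surjective
      (((ContinuousLinearMap.fst ℝ ℝ ℝ).prod (a • ContinuousLinearMap.snd ℝ ℝ ℝ))) := by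
    intro v
    refine ⟨(v.1, v.2 / a), ?_⟩
    simp [ContinuousLinearMap.prod_apply, mul_div_cancel₀ _ ha]
  have : LinearMap.range ((mfderiv 𝓘(ℝ, ℝ × ℝ) 𝓘(ℝ, E) g (p.1, a * p.2 + b)).comp
        ((ContinuousLinearMap.fst ℝ ℝ ℝ).prod (a • ContinuousLinearMap.snd ℝ ℝ ℝ))).toLinearMap
      = LinearMap.range (mfderiv 𝓘(ℝ, ℝ × ℝ) 𝓘(ℝ, E) g (p.1, a * p.2 + b)).toLinearMap := by
    have htop : LinearMap.range ((ContinuousLinearMap.fst ℝ ℝ ℝ).prod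
        (a • ContinuousLinearMap.snd ℝ ℝ ℝ)).toLinearMap = ⊤ :=
      LinearMap.range_eq_top.mpr hsurj
    exact LinearMap.range_comp_of_range_eq_top _ htop
  erw [this]
  exact hr _


/-- Composition of 1-tracks is well defined: compositions of rank-1 homotopic 1-paths
are rank-1 homotopic. -/
theorem compPath_rank1Homotopic (γ₁ γ₁' γ₂ γ₂' : ℝ → M)
    (h₁ : IsOnePath E γ₁) (h₁' : IsOnePath E γ₁')
    (h₂ : IsOnePath E γ₂) (h₂' : IsOnePath E γ₂')
    (H₁ : Rank1Homotopic E γ₁ γ₁') (H₂ : Rank1Homotopic E γ₂ γ₂')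
    (hmatch : γ₁ 1 = γ₂ 0) :
    Rank1Homotopic E (compPath γ₁ γ₂) (compPath γ₁' γ₂') := by
  obtain ⟨g₁, ⟨⟨hg₁s, ⟨ε₁, hε₁, hs₁0, hs₁1, ht₁0, ht₁1⟩, he₁0, he₁1⟩, hr₁⟩, hb₁0, hb₁1⟩ := H₁
  obtain ⟨g₂, ⟨⟨hg₂s, ⟨ε₂, hε₂, hs₂0, hs₂1, ht₂0, ht₂1⟩, he₂0, he₂1⟩, hr₂⟩, hb₂0, hb₂1⟩ := H₂
  set ε : ℝ := min (min ε₁ ε₂) (1/2) with hε_def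
  have hεpos : 0 < ε := lt_min (lt_min hε₁ hε₂) (by norm_num)
  have hεε₁ : ε ≤ ε₁ := le_trans (min_le_left _ _) (min_le_left _ _)
  have hεε₂ : ε ≤ ε₂ := le_trans (min_le_left _ _) (min_le_right _ _)
  have hεhalf : ε ≤ 1/2 := min_le_right _ _
  have hmid₁ : ∀ s, g₁ (s, 1) = γ₁ 1 := fun s => (he₁1 s 0).trans (hb₁0 1)
  have hmid₂ : ∀ s, g₂ (s, 0) = γ₂ 0 := fun s => (he₂0 s 0).trans (hb₂0 0)
  set G : ℝ × ℝ → M := fun q => if q.2 ≤ 1/2 then g₁ (q.1, 2 * q.2) else g₂ (q.1, 2 * q.2 + (-1))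
    with hG_def
  have hGpos : ∀ q : ℝ × ℝ, q.2 ≤ 1/2 → G q = g₁ (q.1, 2 * q.2) := by
    intro q h; simp only [hG_def]; rw [if_pos h]
  have hGneg : ∀ q : ℝ × ℝ, ¬ q.2 ≤ 1/2 → G q = g₂ (q.1, 2 * q.2 + (-1)) := by
    intro q h; simp only [hG_def]; rw [if_neg h]
  have key1 : ∀ q : ℝ × ℝ, q.2 < 1/2 + ε/2 → G q = g₁ (q.1, 2 * q.2) := by
    intro q hq
    by_cases h : q.2 ≤ 1/2
    · exact hGpos q h
    · push_neg at h
      have e2 : g₂ (q.1, 2 * q.2 + (-1)) = γ₂ 0 := by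
        rw [ht₂0 q.1 (2 * q.2 + (-1)) (by linarith), hmid₂]
      have e3 : g₁ (q.1, 2 * q.2) = γ₁ 1 := by
        rw [ht₁1 q.1 (2 * q.2) (by linarith), hmid₁]
      rw [hGneg q (not_le.mpr h), e2, e3, hmatch]
  have key2 : ∀ q : ℝ × ℝ, 1/2 - ε/2 < q.2 → G q = g₂ (q.1, 2 * q.2 + (-1)) := by
    intro q hq
    by_cases h : q.2 ≤ 1/2
    · have e2 : g₁ (q.1, 2 * q.2) = γ₁ 1 := by
        rw [ht₁1 q.1 (2 * q.2) (by linarith), hmid₁]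
      have e3 : g₂ (q.1, 2 * q.2 + (-1)) = γ₂ 0 := by
        rw [ht₂0 q.1 (2 * q.2 + (-1)) (by linarith), hmid₂]
      rw [hGpos q h, e2, e3, hmatch]
    · exact hGneg q h
  have hopen1 : IsOpen {q : ℝ × ℝ | q.2 < 1/2 + ε/2} := isOpen_lt continuous_snd continuous_const
  have hopen2 : IsOpen {q : ℝ × ℝ | 1/2 - ε/2 < q.2} := isOpen_lt continuous_const continuous_snd
  have hcover : ∀ q : ℝ × ℝ, (q.2 < 1/2 + ε/2) ∨ (1/2 - ε/2 < q.2) := by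
    intro q
    by_cases h : q.2 < 1/2 + ε/2
    · exact Or.inl h
    · right; push_neg at h; linarith
  have heq1 : ∀ p : ℝ × ℝ, p.2 < 1/2 + ε/2 →
      G =ᶠ[nhds p] (fun q : ℝ × ℝ => g₁ (q.1, 2 * q.2 + 0)) := by
    intro p hp
    refine Filter.eventuallyEq_of_mem (hopen1.mem_nhds hp) ?_
    intro q hq
    rw [key1 q hq]
    norm_num
  have heq2 : ∀ p : ℝ × ℝ, 1/2 - ε/2 < p.2 →
      G =ᶠ[nhds p] (fun q : ℝ × ℝ => g₂ (q.1, 2 * q.2 + (-1))) := by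
    intro p hp
    exact Filter.eventuallyEq_of_mem (hopen2.mem_nhds hp) (fun q hq => key2 q hq)
  have hGsmooth : ContMDiff 𝓘(ℝ, ℝ × ℝ) 𝓘(ℝ, E) (⊤ : ℕ∞) G := by
    intro p
    rcases hcover p with hp | hp
    · exact ((hg₁s.comp (auxA_contMDiff 2 0)) p).congr_of_eventuallyEq (heq1 p hp)
    · exact ((hg₂s.comp (auxA_contMDiff 2 (-1))) p).congr_of_eventuallyEq (heq2 p hp)
  refine ⟨G, ⟨⟨hGsmooth, ⟨ε/2, by positivity, ?_, ?_, ?_, ?_⟩, ?_, ?_⟩, ?_⟩, ?_, ?_⟩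
  · -- s ≤ ε/2
    intro s t hs
    by_cases h : t ≤ 1/2
    · rw [hGpos (s, t) h, hGpos (0, t) h]
      exact hs₁0 s (2*t) (by linarith)
    · rw [hGneg (s, t) h, hGneg (0, t) h]
      exact hs₂0 s (2*t + (-1)) (by linarith)
  · -- 1 - ε/2 ≤ s
    intro s t hs
    by_cases h : t ≤ 1/2
    · rw [hGpos (s, t) h, hGpos (1, t) h]
      exact hs₁1 s (2*t) (by linarith)
    · rw [hGneg (s, t) h, hGneg (1, t) h]
      exact hs₂1 s (2*t + (-1)) (by linarith)
  · -- t ≤ ε/2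
    intro s t ht
    have ht' : t ≤ 1/2 := le_trans ht (by linarith)
    rw [hGpos (s, t) ht', hGpos (s, 0) (by norm_num)]
    have := ht₁0 s (2*t) (by linarith)
    simpa using this
  · -- 1 - ε/2 ≤ t
    intro s t ht
    have ht' : ¬ t ≤ 1/2 := by push_neg; linarith
    have h1 : (2*(1:ℝ) + (-1)) = 1 := by norm_num
    rw [hGneg (s, t) ht', hGneg (s, 1) (by norm_num), h1]
    exact ht₂1 s (2*t + (-1)) (by linarith)
  · -- single point at t = 0
    intro s s'
    rw [hGpos (s, 0) (by norm_num), hGpos (s', 0) (by norm_num)]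
    simpa using he₁0 s s'
  · -- single point at t = 1
    intro s s'
    have h1 : (2*(1:ℝ) + (-1)) = 1 := by norm_num
    rw [hGneg (s, 1) (by norm_num), hGneg (s', 1) (by norm_num), h1]
    exact he₂1 s s'
  · -- rank condition
    intro p
    rcases hcover p with hp | hp
    · rw [(heq1 p hp).mfderiv_eq]
      exact aux_rank E hg₁s hr₁ 2 0 two_ne_zero p
    · rw [(heq2 p hp).mfderiv_eq]
      exact aux_rank E hg₂s hr₂ 2 (-1) two_ne_zero p
  · -- left end is compPath γ₁ γ₂
    intro t
    by_cases h : t ≤ 1/2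
    · rw [hGpos (0, t) h, compPath, if_pos h]
      exact hb₁0 (2*t)
    · rw [hGneg (0, t) h, compPath, if_neg h, show 2*t - 1 = 2*t + (-1) by ring]
      exact hb₂0 (2*t + (-1))
  · -- right end is compPath γ₁' γ₂'
    intro t
    by_cases h : t ≤ 1/2
    · rw [hGpos (1, t) h, compPath, if_pos h]
      exact hb₁1 (2*t)
    · rw [hGneg (1, t) h, compPath, if_neg h, show 2*t - 1 = 2*t + (-1) by ring]
      exact hb₂1 (2*t + (-1))
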